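/- Let q be a prime power, n a positive integer, r a positive integer, and t a nonnegative integer with t ≠ r. The map S : F_{q^n} → F_{q^n} given by S(x) = x^{q^r} is scattered of index t over F_{q^n} if and only if gcd(|t - r|, n) = 1. -/

import Mathlib

/-- A map `S : L → L` on the field `L = F_{q^n}` is scattered of index `t` over
`F_{q^n}/F_q` if for all nonzero `y, z`, `S(y)/y^{q^t} = S(z)/z^{q^t}` implies
`y/z ∈ F_q`.  Membership of `y/z` in the subfield `F_q` is expressed via its
characterization as the fixed field of the `q`-power Frobenius: `(y/z)^q = y/z`. -/
def IsScattered (q t : ℕ) {L : Type} [Field L] (S : L → L) : Prop :=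
  ∀ y z : L, y ≠ 0 → z ≠ 0 → S y * z ^ q ^ t = S z * y ^ q ^ t → (y / z) ^ q = y / z

section Aux

variable {L : Type} [Field L] [Fintype L]

lemma coprime_aux {q n : ℕ} (hq2 : 2 ≤ q) (hn : 0 < n) (e : ℕ) :
    Nat.Coprime (q ^ e) (q ^ n - 1) := by
  apply Nat.Coprime.pow_left
  have h1 : 1 ≤ q ^ n := Nat.one_le_pow _ _ (by omega)
  have hd1 : Nat.gcd q (q ^ n - 1) ∣ q ^ n :=
    (Nat.gcd_dvd_left _ _).trans (dvd_pow_self q hn.ne')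
  have hd := Nat.dvd_sub hd1 (Nat.gcd_dvd_right _ _)
  rw [Nat.sub_sub_self h1] at hd
  exact Nat.eq_one_of_dvd_one hd

lemma pow_inj_aux {q n : ℕ} (hq2 : 2 ≤ q) (hn : 0 < n)
    (hcard : Fintype.card L = q ^ n) (e : ℕ) {a b : L}
    (h : a ^ q ^ e = b ^ q ^ e) : a = b := by
  have hM : q ^ e ≠ 0 := (pow_pos (by omega : 0 < q) e).ne'
  rcases eq_or_ne b 0 with rb | rb
  · subst rb
    rw [zero_pow hM, pow_eq_zero_iff hM] at h
    exact h
  rcases eq_or_ne a 0 with ra | ra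
  · subst ra
    rw [zero_pow hM, eq_comm, pow_eq_zero_iff hM] at h
    exact h.symm ▸ rfl
  · -- pass to units
    set A := Units.mk0 a ra
    set B := Units.mk0 b rb
    have hAB : A ^ q ^ e = B ^ q ^ e := by
      ext; push_cast; exact h
    have hcardU : Nat.card Lˣ = q ^ n - 1 := by
      rw [Nat.card_units L, Nat.card_eq_fintype_card, hcard]
    have h1 : (A * B⁻¹) ^ q ^ e = 1 := by
      rw [mul_pow, hAB, ← mul_pow, mul_inv_cancel, one_pow]
    have hd1 : orderOf (A * B⁻¹) ∣ q ^ e := orderOf_dvd_of_pow_eq_one h1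
    have hd2 : orderOf (A * B⁻¹) ∣ q ^ n - 1 := hcardU ▸ orderOf_dvd_natCard _
    have : orderOf (A * B⁻¹) = 1 :=
      Nat.eq_one_of_dvd_one ((coprime_aux hq2 hn e) ▸ Nat.dvd_gcd hd1 hd2)
    have : A = B := by
      have := orderOf_eq_one_iff.mp this
      rwa [mul_inv_eq_one] at this
    have := congrArg Units.val this
    simpa [A, B] using this

lemma gcd_aux {q n : ℕ} (hq2 : 2 ≤ q) (hn : 0 < n)
    (hcard : Fintype.card L = q ^ n) (u : L) :
    ∀ a b : ℕ, u ^ q ^ a = u → u ^ q ^ b = u → u ^ q ^ Nat.gcd a b = u := by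
  intro a b
  induction a, b using Nat.gcd.induction with
  | H0 b => intro _ h; simpa using h
  | H1 a b ha IH =>
    intro h1 h2
    rw [Nat.gcd_rec]
    refine IH ?_ h1
    -- show u ^ q ^ (b % a) = u
    have hk : ∀ k : ℕ, u ^ q ^ (a * k) = u := by
      intro k
      induction k with
      | zero => simp
      | succ k ih =>
        have : a * (k + 1) = a * k + a := by ring
        rw [this, pow_add, pow_mul, ih, h1]
    have key : (u ^ q ^ (b % a)) ^ q ^ (a * (b / a)) = u ^ q ^ (a * (b / a)) := by
      rw [← pow_mul, ← pow_add, Nat.mod_add_div b a, h2, hk]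
    exact pow_inj_aux hq2 hn hcard _ key

end Aux

/-- Let q be a prime power, n a positive integer, r a positive
integer, and t a nonnegative integer with t ≠ r.  The map S(x) = x^{q^r} is
scattered of index t over F_{q^n} iff gcd(|t - r|, n) = 1. -/
theorem stmt3 (q n r t : ℕ) (hq : ∃ p m : ℕ, p.Prime ∧ 0 < m ∧ q = p ^ m)
    (hn : 0 < n) (hr : 0 < r) (htr : t ≠ r)
    (L : Type) [Field L] [Fintype L] (hcard : Fintype.card L = q ^ n) :
    IsScattered q t (fun x : L => x ^ q ^ r) ↔ Nat.gcd (Nat.dist t r) n = 1 := by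
  have hq2 : 2 ≤ q := by
    obtain ⟨p, m, hp, hm, rfl⟩ := hq
    calc 2 ≤ p := hp.two_le
    _ ≤ p ^ m := Nat.le_self_pow hm.ne' p
  set d := Nat.dist t r with hd
  have hd0 : 0 < d := Nat.dist_pos_of_ne htr
  -- key lemma A : u ^ q ^ d = u → u ^ q ^ r = u ^ q ^ t
  have lemA : ∀ u : L, u ^ q ^ d = u → u ^ q ^ r = u ^ q ^ t := by
    intro u hu
    rcases le_total t r with h | h
    · have : r = d + t := by have := Nat.dist_eq_sub_of_le h; omega
      rw [this, pow_add, pow_mul, hu]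
    · have : t = d + r := by have := Nat.dist_eq_sub_of_le_right h; omega
      rw [this, pow_add, pow_mul, hu]
  -- key lemma B : u ^ q ^ r = u ^ q ^ t → u ^ q ^ d = u
  have lemB : ∀ u : L, u ^ q ^ r = u ^ q ^ t → u ^ q ^ d = u := by
    intro u hu
    rcases le_total t r with h | h
    · have hrd : r = d + t := by have := Nat.dist_eq_sub_of_le h; omega
      apply pow_inj_aux hq2 hn hcard t
      rw [← pow_mul, ← pow_add, ← hrd, hu]
    · have htd : t = d + r := by have := Nat.dist_eq_sub_of_le_right h; omega
      apply pow_inj_aux hq2 hn hcard r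
      rw [← pow_mul, ← pow_add, ← htd, ← hu]
  -- scattered iff pointwise condition
  have hiff : IsScattered q t (fun x : L => x ^ q ^ r) ↔
      ∀ u : L, u ≠ 0 → u ^ q ^ d = u → u ^ q = u := by
    constructor
    · intro hS u hu hud
      have := hS u 1 hu one_ne_zero (by simp [lemA u hud])
      simpa using this
    · intro hP y z hy hz hyz
      have hzr : (z : L) ^ q ^ r ≠ 0 := pow_ne_zero _ hz
      have hzt : (z : L) ^ q ^ t ≠ 0 := pow_ne_zero _ hz
      have hyz' : y ^ q ^ r * z ^ q ^ t = z ^ q ^ r * y ^ q ^ t := hyz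
      have h1 : (y / z) ^ q ^ r = (y / z) ^ q ^ t := by
        rw [div_pow, div_pow, div_eq_div_iff (pow_ne_zero _ hz) (pow_ne_zero _ hz)]
        linear_combination hyz'
      exact hP (y / z) (div_ne_zero hy hz) (lemB _ h1)
  rw [hiff]
  constructor
  · -- scattered → gcd = 1
    intro hP
    by_contra hg
    set g := Nat.gcd d n with hgdef
    have hgd : g ∣ d := Nat.gcd_dvd_left _ _
    have hgn : g ∣ n := Nat.gcd_dvd_right _ _
    have hgpos : 0 < g := Nat.gcd_pos_of_pos_left _ hd0
    have hg1 : 2 ≤ g := by omega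
    -- q^g - 1 divides q^n - 1 and q^d - 1
    have hdvd : ∀ k : ℕ, g ∣ k → q ^ g - 1 ∣ q ^ k - 1 := by
      intro k ⟨c, hc⟩
      have := Nat.sub_dvd_pow_sub_pow (q ^ g) 1 c
      rwa [one_pow, ← pow_mul, ← hc] at this
    have hcardU : Nat.card Lˣ = q ^ n - 1 := by
      rw [Nat.card_units L, Nat.card_eq_fintype_card, hcard]
    -- get element of order q ^ g - 1
    obtain ⟨ζ, hζ⟩ := IsCyclic.exists_ofOrder_eq_natCard (α := Lˣ)
    set N := q ^ n - 1 with hN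
    have hNpos : 0 < N := by
      have : 2 ≤ q ^ n := le_trans hq2 (Nat.le_self_pow hn.ne' q)
      omega
    have he : q ^ g - 1 ∣ N := hdvd n hgn
    have hepos : 0 < q ^ g - 1 := by
      have : 2 ≤ q ^ g := le_trans hq2 (Nat.le_self_pow (by omega) q)
      omega
    set u := ζ ^ (N / (q ^ g - 1)) with hu
    have hou : orderOf u = q ^ g - 1 := by
      rw [hu, orderOf_pow, hζ, hcardU,
        Nat.gcd_eq_right (Nat.div_dvd_of_dvd he), Nat.div_div_self he hNpos.ne']
    have hu1 : u ^ (q ^ d - 1) = 1 := by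
      apply orderOf_dvd_iff_pow_eq_one.mp
      rw [hou]; exact hdvd d hgd
    have hud : (u : L) ^ q ^ d = u := by
      have : u ^ q ^ d = u := by
        have hqd1 : q ^ d = (q ^ d - 1) + 1 := by
          have : 1 ≤ q ^ d := Nat.one_le_pow _ _ (by omega)
          omega
        rw [hqd1, pow_add, hu1, one_mul, pow_one]
      calc (u : L) ^ q ^ d = ((u ^ q ^ d : Lˣ) : L) := by push_cast; ring
        _ = u := by rw [this]
    have := hP u (Units.ne_zero u) hud
    -- derive contradiction : u ^ (q - 1) = 1 → orderOf u ∣ q - 1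
    have huq : u ^ (q - 1) = 1 := by
      have huu : u ^ q = u := by
        ext; push_cast; exact this
      have hq1 : q = (q - 1) + 1 := by omega
      have := huu
      rw [hq1, pow_add, pow_one] at this
      exact mul_right_cancel (by rwa [one_mul])
    have hle : q ^ g - 1 ≤ q - 1 := Nat.le_of_dvd (by omega)
      (hou ▸ orderOf_dvd_of_pow_eq_one huq)
    have : q < q ^ g := by
      calc q = q ^ 1 := (pow_one q).symm
      _ < q ^ g := Nat.pow_lt_pow_right (by omega) (by omega)
    omega
  · -- gcd = 1 → scattered
    intro hg u hu hud
    have hun : u ^ q ^ n = u := by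
      rw [← hcard]; exact FiniteField.pow_card u
    have := gcd_aux hq2 hn hcard u d n hud hun
    rwa [hg, pow_one] at this
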